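/- Fix integers m, p, N ≥ 1. The function G₇(r) = r^m(1 + 4r^m + r^{2m})/(1 - r^m)⁴ + r^{pN}(N + r^p - N r^p)/(1 - r^p)² - 1/4 is strictly increasing on (0,1), satisfies G₇(0) = -1/4 and tends to +∞ as r → 1⁻; hence it has a unique root in (0,1). -/

import Mathlib

open Filter Set

private lemma aux_A_mono {x y : ℝ} (hx : 0 < x) (hxy : x < y) (hy : y < 1) :
    x * (1 + 4 * x + x ^ 2) / (1 - x) ^ 4 < y * (1 + 4 * y + y ^ 2) / (1 - y) ^ 4 := by
  have hy0 : 0 < y := hx.trans hxy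
  apply div_lt_div₀
  · exact mul_lt_mul hxy (by nlinarith [sq_nonneg x, sq_nonneg y]) (by nlinarith [sq_nonneg x]) hy0.le
  · apply pow_le_pow_left₀ (by linarith) (by linarith)
  · exact mul_nonneg hy0.le (by nlinarith [sq_nonneg y])
  · exact pow_pos (by linarith) 4

private lemma aux_B_mono {x y : ℝ} (N : ℕ) (hN : 1 ≤ N) (hx : 0 < x) (hxy : x < y)
    (hy : y < 1) :
    x ^ N * ((N : ℝ) + x - (N : ℝ) * x) / (1 - x) ^ 2
      < y ^ N * ((N : ℝ) + y - (N : ℝ) * y) / (1 - y) ^ 2 := by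
  have hx1 : x < 1 := hxy.trans hy
  have hxid : x ^ N * ((N : ℝ) + x - (N : ℝ) * x) / (1 - x) ^ 2
      = (N : ℝ) * x ^ N / (1 - x) + x ^ (N + 1) / (1 - x) ^ 2 := by
    have h : (1 : ℝ) - x ≠ 0 := by linarith
    field_simp
    ring
  have hyid : y ^ N * ((N : ℝ) + y - (N : ℝ) * y) / (1 - y) ^ 2
      = (N : ℝ) * y ^ N / (1 - y) + y ^ (N + 1) / (1 - y) ^ 2 := by
    have h : (1 : ℝ) - y ≠ 0 := by linarith
    field_simp
    ring
  rw [hxid, hyid]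
  have hNpos : (0 : ℝ) < (N : ℝ) := by positivity
  have h1 : (N : ℝ) * x ^ N / (1 - x) < (N : ℝ) * y ^ N / (1 - y) := by
    apply div_lt_div₀
    · exact mul_lt_mul_of_pos_left (pow_lt_pow_left₀ hxy hx.le (by omega)) hNpos
    · linarith
    · exact mul_nonneg (Nat.cast_nonneg N) (pow_nonneg (hx.trans hxy).le N)
    · linarith
  have h2 : x ^ (N + 1) / (1 - x) ^ 2 < y ^ (N + 1) / (1 - y) ^ 2 := by
    apply div_lt_div₀
    · exact pow_lt_pow_left₀ hxy hx.le (by omega)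
    · apply pow_le_pow_left₀ (by linarith) (by linarith)
    · exact pow_nonneg (hx.trans hxy).le _
    · exact pow_pos (by linarith) 2
  linarith

theorem stmt_18 (m p N : ℕ) (hm : 1 ≤ m) (hp : 1 ≤ p) (hN : 1 ≤ N) (G : ℝ → ℝ)
    (hG : ∀ r : ℝ, G r = r ^ m * (1 + 4 * r ^ m + r ^ (2 * m)) / (1 - r ^ m) ^ 4
        + r ^ (p * N) * ((N : ℝ) + r ^ p - (N : ℝ) * r ^ p) / (1 - r ^ p) ^ 2 - 1 / 4) :
    StrictMonoOn G (Set.Ioo (0 : ℝ) 1) ∧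
    G 0 = -1 / 4 ∧
    Tendsto G (nhdsWithin 1 (Set.Iio (1 : ℝ))) atTop ∧
    (∃! r : ℝ, r ∈ Set.Ioo (0 : ℝ) 1 ∧ G r = 0) := by
  -- strict monotonicity
  have hmono : StrictMonoOn G (Set.Ioo (0 : ℝ) 1) := by
    intro a ha b hb hab
    obtain ⟨ha0, ha1⟩ := ha
    obtain ⟨hb0, hb1⟩ := hb
    rw [hG a, hG b]
    have hA := aux_A_mono (pow_pos ha0 m) (pow_lt_pow_left₀ hab ha0.le (by omega))
      (pow_lt_one₀ hb0.le hb1 (by omega))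
    have hB := aux_B_mono N hN (pow_pos ha0 p) (pow_lt_pow_left₀ hab ha0.le (by omega))
      (pow_lt_one₀ hb0.le hb1 (by omega))
    rw [show a ^ (2 * m) = (a ^ m) ^ 2 from pow_mul' a 2 m,
      show b ^ (2 * m) = (b ^ m) ^ 2 from pow_mul' b 2 m,
      show a ^ (p * N) = (a ^ p) ^ N from pow_mul a p N,
      show b ^ (p * N) = (b ^ p) ^ N from pow_mul b p N]
    linarith
  -- value at 0
  have hG0 : G 0 = -1 / 4 := by
    rw [hG]
    rw [zero_pow (show m ≠ 0 by omega), zero_pow (show 2 * m ≠ 0 by omega),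
      zero_pow (show p * N ≠ 0 by positivity), zero_pow (show p ≠ 0 by omega)]
    norm_num
  -- tendsto atTop
  have hmem : Set.Ioo (0 : ℝ) 1 ∈ nhdsWithin (1 : ℝ) (Set.Iio 1) :=
    Ioo_mem_nhdsLT_of_mem (by constructor <;> norm_num)
  have htop : Tendsto G (nhdsWithin 1 (Set.Iio (1 : ℝ))) atTop := by
    have h4 : Tendsto (fun r : ℝ => 1 - r ^ m) (nhdsWithin 1 (Set.Iio (1 : ℝ)))
        (nhdsWithin 0 (Set.Ioi 0)) := by
      apply tendsto_nhdsWithin_of_tendsto_nhds_of_eventually_within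
      · have hc : Continuous (fun r : ℝ => 1 - r ^ m) := by fun_prop
        have := hc.tendsto (1 : ℝ)
        simpa using this.mono_left nhdsWithin_le_nhds
      · filter_upwards [hmem] with r hr
        have : r ^ m < 1 := pow_lt_one₀ hr.1.le hr.2 (by omega)
        simpa using this
    have h3 : Tendsto (fun r : ℝ => (1 - r ^ m)⁻¹) (nhdsWithin 1 (Set.Iio (1 : ℝ)))
        atTop := tendsto_inv_nhdsGT_zero.comp h4
    have h2 : Tendsto (fun r : ℝ => ((1 - r ^ m)⁻¹) ^ 4) (nhdsWithin 1 (Set.Iio (1 : ℝ)))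
        atTop := (tendsto_pow_atTop (by norm_num : (4 : ℕ) ≠ 0)).comp h3
    have h1 : Tendsto (fun r : ℝ => r ^ m) (nhdsWithin 1 (Set.Iio (1 : ℝ))) (nhds 1) := by
      have := (continuous_pow m).tendsto (1 : ℝ)
      simpa using this.mono_left nhdsWithin_le_nhds
    have hmul : Tendsto (fun r : ℝ => r ^ m * ((1 - r ^ m)⁻¹) ^ 4)
        (nhdsWithin 1 (Set.Iio (1 : ℝ))) atTop := Tendsto.pos_mul_atTop one_pos h1 h2
    have hmul' : Tendsto (fun r : ℝ => r ^ m * ((1 - r ^ m)⁻¹) ^ 4 - 1 / 4)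
        (nhdsWithin 1 (Set.Iio (1 : ℝ))) atTop := by
      simp only [sub_eq_add_neg]
      exact tendsto_atTop_add_const_right _ (-(1 / 4)) hmul
    apply tendsto_atTop_mono' _ _ hmul'
    filter_upwards [hmem] with r hr
    rw [hG r]
    have hr0 := hr.1
    have hr1 := hr.2
    have hrm1 : r ^ m < 1 := pow_lt_one₀ hr0.le hr1 (by omega)
    have hrp1 : r ^ p < 1 := pow_lt_one₀ hr0.le hr1 (by omega)
    have hrm0 : 0 < r ^ m := pow_pos hr0 m
    have hrp0 : 0 < r ^ p := pow_pos hr0 p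
    have hB : 0 ≤ r ^ (p * N) * ((N : ℝ) + r ^ p - (N : ℝ) * r ^ p) / (1 - r ^ p) ^ 2 := by
      apply div_nonneg _ (by positivity)
      apply mul_nonneg (by positivity)
      have hN0 : (0 : ℝ) ≤ (N : ℝ) := by positivity
      nlinarith [mul_nonneg hN0 (by linarith : (0:ℝ) ≤ 1 - r ^ p)]
    have hA : r ^ m * ((1 - r ^ m)⁻¹) ^ 4
        ≤ r ^ m * (1 + 4 * r ^ m + r ^ (2 * m)) / (1 - r ^ m) ^ 4 := by
      rw [inv_pow, ← div_eq_mul_inv, div_le_div_iff_of_pos_right (pow_pos (by linarith : (0:ℝ) < 1 - r ^ m) 4)]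
      have h2m : 0 ≤ r ^ (2 * m) := by positivity
      nlinarith
    linarith
  refine ⟨hmono, hG0, htop, ?_⟩
  -- existence of a root
  have hev : ∀ᶠ r in nhdsWithin (1 : ℝ) (Set.Iio 1), 0 < G r ∧ r ∈ Set.Ioo (0 : ℝ) 1 :=
    (htop.eventually_gt_atTop 0).and (eventually_of_mem hmem fun r hr => hr)
  obtain ⟨r₀, hr₀pos, hr₀mem⟩ := hev.exists
  have hcont : ContinuousOn G (Set.Icc 0 r₀) := by
    apply ContinuousOn.congr (f := fun r : ℝ =>
      r ^ m * (1 + 4 * r ^ m + r ^ (2 * m)) / (1 - r ^ m) ^ 4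
        + r ^ (p * N) * ((N : ℝ) + r ^ p - (N : ℝ) * r ^ p) / (1 - r ^ p) ^ 2 - 1 / 4)
    · apply ContinuousOn.sub _ continuousOn_const
      apply ContinuousOn.add
      · apply ContinuousOn.div
        · exact (by fun_prop : Continuous fun r : ℝ =>
            r ^ m * (1 + 4 * r ^ m + r ^ (2 * m))).continuousOn
        · exact (by fun_prop : Continuous fun r : ℝ => (1 - r ^ m) ^ 4).continuousOn
        · intro x hx
          have : x ^ m < 1 := pow_lt_one₀ hx.1 (hx.2.trans_lt hr₀mem.2) (by omega)
          exact pow_ne_zero _ (ne_of_gt (by linarith))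
      · apply ContinuousOn.div
        · exact (by fun_prop : Continuous fun r : ℝ =>
            r ^ (p * N) * ((N : ℝ) + r ^ p - (N : ℝ) * r ^ p)).continuousOn
        · exact (by fun_prop : Continuous fun r : ℝ => (1 - r ^ p) ^ 2).continuousOn
        · intro x hx
          have : x ^ p < 1 := pow_lt_one₀ hx.1 (hx.2.trans_lt hr₀mem.2) (by omega)
          exact pow_ne_zero _ (ne_of_gt (by linarith))
    · intro x _
      exact hG x
  have h0mem : (0 : ℝ) ∈ Set.Icc (G 0) (G r₀) := by
    constructor
    · rw [hG0]; norm_num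
    · exact hr₀pos.le
  obtain ⟨c, hc, hGc⟩ := intermediate_value_Icc hr₀mem.1.le hcont h0mem
  have hcne : c ≠ 0 := by
    intro h
    rw [h, hG0] at hGc
    norm_num at hGc
  have hcmem : c ∈ Set.Ioo (0 : ℝ) 1 :=
    ⟨lt_of_le_of_ne hc.1 (Ne.symm hcne), lt_of_le_of_lt hc.2 hr₀mem.2⟩
  refine ⟨c, ⟨hcmem, hGc⟩, ?_⟩
  rintro d ⟨hdmem, hGd⟩
  exact hmono.injOn hdmem hcmem (by rw [hGd, hGc])
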